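/- Let n ≥ 2 and m ≥ 2 be integers, let f ∈ R_m = ℤ[x_1, ..., x_m], and let 1 ≤ i < j ≤ m. Then 2^n divides the coefficient c_{f^{2^n}}(x_i x_j) of the monomial x_i x_j in the polynomial f^{2^n}. -/

import Mathlib

open MvPolynomial Finsupp

variable {m : ℕ}

lemma anti_single (i : Fin m) (a b : Fin m →₀ ℕ) (h : a + b = single i 1) :
    (a = 0 ∧ b = single i 1) ∨ (a = single i 1 ∧ b = 0) := by
  have h' : ∀ k, a k + b k = (single i 1 : Fin m →₀ ℕ) k := fun k => by
    rw [← h]; simp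
  have hi := h' i
  simp [single_apply] at hi
  have hoth : ∀ k, k ≠ i → a k = 0 ∧ b k = 0 := by
    intro k hk
    have := h' k
    rw [single_apply, if_neg (fun hh => hk hh.symm)] at this
    omega
  rcases Nat.add_eq_one_iff.mp hi with ⟨ha, hb⟩ | ⟨ha, hb⟩
  · left
    refine ⟨?_, ?_⟩ <;> ext k <;> by_cases hk : k = i
    · subst hk; simpa using ha
    · simpa using (hoth k hk).1
    · subst hk; simp [single_apply, hb]
    · rw [single_apply, if_neg (fun hh => hk hh.symm)]; exact (hoth k hk).2
  · right
    refine ⟨?_, ?_⟩ <;> ext k <;> by_cases hk : k = i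
    · subst hk; simp [single_apply, ha]
    · rw [single_apply, if_neg (fun hh => hk hh.symm)]; exact (hoth k hk).1
    · subst hk; simpa using hb
    · simpa using (hoth k hk).2

lemma anti_pair {i j : Fin m} (hij : i ≠ j) (a b : Fin m →₀ ℕ)
    (h : a + b = single i 1 + single j 1) :
    (a = 0 ∧ b = single i 1 + single j 1) ∨
    (a = single i 1 ∧ b = single j 1) ∨
    (a = single j 1 ∧ b = single i 1) ∨
    (a = single i 1 + single j 1 ∧ b = 0) := by
  have h' : ∀ k, a k + b k = (single i 1 + single j 1 : Fin m →₀ ℕ) k := fun k => by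
    rw [← h]; simp
  have hi := h' i
  have hj := h' j
  simp [single_apply, hij, hij.symm] at hi hj
  have hoth : ∀ k, k ≠ i → k ≠ j → a k = 0 ∧ b k = 0 := by
    intro k hk1 hk2
    have := h' k
    rw [Finsupp.add_apply, single_apply, single_apply,
      if_neg (fun hh => hk1 hh.symm), if_neg (fun hh => hk2 hh.symm)] at this
    omega
  have key : ∀ c : Fin m →₀ ℕ, c i = 0 → c j = 0 → (∀ k, k ≠ i → k ≠ j → c k = 0) → c = 0 := by
    intro c hci hcj hc
    ext k
    by_cases hk1 : k = i
    · subst hk1; simpa using hci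
    by_cases hk2 : k = j
    · subst hk2; simpa using hcj
    · simpa using hc k hk1 hk2
  have keyi : ∀ c : Fin m →₀ ℕ, c i = 1 → c j = 0 → (∀ k, k ≠ i → k ≠ j → c k = 0) →
      c = single i 1 := by
    intro c hci hcj hc
    ext k
    by_cases hk1 : k = i
    · subst hk1; simpa [single_apply] using hci
    by_cases hk2 : k = j
    · subst hk2; rw [single_apply, if_neg hij]; exact hcj
    · rw [single_apply, if_neg (fun hh => hk1 hh.symm)]; exact hc k hk1 hk2
  have keyj : ∀ c : Fin m →₀ ℕ, c i = 0 → c j = 1 → (∀ k, k ≠ i → k ≠ j → c k = 0) →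
      c = single j 1 := by
    intro c hci hcj hc
    ext k
    by_cases hk2 : k = j
    · subst hk2; simpa [single_apply] using hcj
    by_cases hk1 : k = i
    · subst hk1; rw [single_apply, if_neg (fun hh => hij hh.symm)]; exact hci
    · rw [single_apply, if_neg (fun hh => hk2 hh.symm)]; exact hc k hk1 hk2
  have keyij : ∀ c : Fin m →₀ ℕ, c i = 1 → c j = 1 → (∀ k, k ≠ i → k ≠ j → c k = 0) →
      c = single i 1 + single j 1 := by
    intro c hci hcj hc
    ext k
    rw [Finsupp.add_apply, single_apply, single_apply]
    by_cases hk1 : k = i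
    · subst hk1; rw [if_pos rfl, if_neg (fun hh => hij hh.symm)]; simpa using hci
    by_cases hk2 : k = j
    · subst hk2; rw [if_neg hij, if_pos rfl]; simpa using hcj
    · rw [if_neg (fun hh => hk1 hh.symm), if_neg (fun hh => hk2 hh.symm)]
      simpa using hc k hk1 hk2
  have hao := fun k hk1 hk2 => (hoth k hk1 hk2).1
  have hbo := fun k hk1 hk2 => (hoth k hk1 hk2).2
  rcases Nat.add_eq_one_iff.mp hi with ⟨hai, hbi⟩ | ⟨hai, hbi⟩ <;>
    rcases Nat.add_eq_one_iff.mp hj with ⟨haj, hbj⟩ | ⟨haj, hbj⟩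
  · exact Or.inl ⟨key a hai haj hao, keyij b hbi hbj hbo⟩
  · exact Or.inr (Or.inr (Or.inl ⟨keyj a hai haj hao, keyi b hbi hbj hbo⟩))
  · exact Or.inr (Or.inl ⟨keyi a hai haj hao, keyj b hbi hbj hbo⟩)
  · exact Or.inr (Or.inr (Or.inr ⟨keyij a hai haj hao, key b hbi hbj hbo⟩))

lemma coeff_single_sq (g : MvPolynomial (Fin m) ℤ) (i : Fin m) :
    coeff (single i 1) (g * g) = 2 * (coeff 0 g * coeff (single i 1) g) := by
  rw [coeff_mul]
  have hset : Finset.HasAntidiagonal.antidiagonal (single i 1 : Fin m →₀ ℕ) =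
      {((0 : Fin m →₀ ℕ), single i 1), (single i 1, 0)} := by
    ext p
    simp only [Finset.HasAntidiagonal.mem_antidiagonal, Finset.mem_insert, Finset.mem_singleton]
    constructor
    · intro h
      rcases anti_single i p.1 p.2 h with ⟨h1, h2⟩ | ⟨h1, h2⟩
      · left; exact Prod.ext h1 h2
      · right; exact Prod.ext h1 h2
    · rintro (rfl | rfl) <;> simp
  rw [hset]
  have hne : ((0 : Fin m →₀ ℕ), single i 1) ≠ (single i 1, 0) := by
    intro h
    have h1 := congrArg Prod.fst h
    simp only at h1
    exact one_ne_zero (Finsupp.single_eq_zero.mp h1.symm)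
  rw [Finset.sum_pair hne]
  ring

lemma coeff_pair_sq (g : MvPolynomial (Fin m) ℤ) {i j : Fin m} (hij : i ≠ j) :
    coeff (single i 1 + single j 1) (g * g) =
      2 * (coeff 0 g * coeff (single i 1 + single j 1) g +
        coeff (single i 1) g * coeff (single j 1) g) := by
  rw [coeff_mul]
  set d : Fin m →₀ ℕ := single i 1 + single j 1 with hd
  have hdi : d i = 1 := by simp [hd, single_apply, hij.symm]
  have hd0 : d ≠ 0 := by intro h; rw [h] at hdi; simp at hdi
  have hdsi : d ≠ single i 1 := by
    intro h
    have : d j = (single i 1 : Fin m →₀ ℕ) j := by rw [h]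
    simp [hd, single_apply, hij, hij.symm] at this
  have hdsj : d ≠ single j 1 := by
    intro h
    have : d i = (single j 1 : Fin m →₀ ℕ) i := by rw [h]
    simp [hd, single_apply, hij, hij.symm] at this
  have hsisj : (single i 1 : Fin m →₀ ℕ) ≠ single j 1 := by
    intro h
    have : (single i 1 : Fin m →₀ ℕ) i = (single j 1 : Fin m →₀ ℕ) i := by rw [h]
    simp [single_apply, hij.symm] at this
  have hsi0 : (single i 1 : Fin m →₀ ℕ) ≠ 0 := fun h => one_ne_zero (Finsupp.single_eq_zero.mp h)
  have hsj0 : (single j 1 : Fin m →₀ ℕ) ≠ 0 := fun h => one_ne_zero (Finsupp.single_eq_zero.mp h)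
  have hset : Finset.HasAntidiagonal.antidiagonal d =
      {((0 : Fin m →₀ ℕ), d), (single i 1, single j 1), (single j 1, single i 1), (d, 0)} := by
    ext p
    simp only [Finset.HasAntidiagonal.mem_antidiagonal, Finset.mem_insert, Finset.mem_singleton]
    constructor
    · intro h
      rcases anti_pair hij p.1 p.2 h with ⟨h1, h2⟩ | ⟨h1, h2⟩ | ⟨h1, h2⟩ | ⟨h1, h2⟩
      · exact Or.inl (Prod.ext h1 h2)
      · exact Or.inr (Or.inl (Prod.ext h1 h2))
      · exact Or.inr (Or.inr (Or.inl (Prod.ext h1 h2)))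
      · exact Or.inr (Or.inr (Or.inr (Prod.ext h1 h2)))
    · rintro (rfl | rfl | rfl | rfl) <;> simp [hd, add_comm]
  rw [hset]
  rw [Finset.sum_insert (by
      simp only [Finset.mem_insert, Finset.mem_singleton, Prod.ext_iff, not_or]
      exact ⟨fun h => hsi0 h.1.symm, fun h => hsj0 h.1.symm, fun h => hd0 h.1.symm⟩),
    Finset.sum_insert (by
      simp only [Finset.mem_insert, Finset.mem_singleton, Prod.ext_iff, not_or]
      exact ⟨fun h => hsisj h.1, fun h => hsj0 h.2⟩),
    Finset.sum_insert (by
      simp only [Finset.mem_singleton, Prod.ext_iff, not_and]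
      exact fun _ h => hsi0 h),
    Finset.sum_singleton]
  ring

lemma dvd_coeff_single (f : MvPolynomial (Fin m) ℤ) (i : Fin m) :
    ∀ k : ℕ, (2 : ℤ) ^ k ∣ coeff (single i 1) (f ^ 2 ^ k)
  | 0 => by simp
  | (k + 1) => by
    have hpow : f ^ 2 ^ (k + 1) = f ^ 2 ^ k * f ^ 2 ^ k := by
      rw [← pow_add, ← two_mul, ← pow_succ']
    rw [hpow, coeff_single_sq, pow_succ']
    exact mul_dvd_mul_left 2 (Dvd.dvd.mul_left (dvd_coeff_single f i k) _)

lemma dvd_coeff_pair (f : MvPolynomial (Fin m) ℤ) {i j : Fin m} (hij : i ≠ j) :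
    ∀ k : ℕ, (2 : ℤ) ^ k ∣ coeff (single i 1 + single j 1) (f ^ 2 ^ k)
  | 0 => by simp
  | (k + 1) => by
    have hpow : f ^ 2 ^ (k + 1) = f ^ 2 ^ k * f ^ 2 ^ k := by
      rw [← pow_add, ← two_mul, ← pow_succ']
    rw [hpow, coeff_pair_sq _ hij, pow_succ']
    refine mul_dvd_mul_left 2 (dvd_add ?_ ?_)
    · exact Dvd.dvd.mul_left (dvd_coeff_pair f hij k) _
    · exact Dvd.dvd.mul_right (dvd_coeff_single f i k) _

/-- For `n ≥ 2` and `i < j`, `2^n` divides the coefficient of `x_i x_j` in `f^(2^n)`. -/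
theorem stmt_2 (n m : ℕ) (hn : 2 ≤ n) (hm : 2 ≤ m)
    (f : MvPolynomial (Fin m) ℤ) (i j : Fin m) (hij : i < j) :
    (2 : ℤ) ^ n ∣
      MvPolynomial.coeff (Finsupp.single i 1 + Finsupp.single j 1) (f ^ 2 ^ n) := by
  exact dvd_coeff_pair f hij.ne n
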